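/- Let $D_n = \hat{M}_n - M_n$ in the Bernoulli product model, $n\geq 2$. For all $0 < \lambda < n-1$, $\log\mathbb{E}\, e^{-\lambda(D_n - \mathbb{E} D_n)} \leq \frac{v_n^- \lambda^2}{2(1-\lambda/(n-1))}$ where $v_n^- = \frac{4}{(n-1)^2}\sum_{j\geq 1}(1-e^{-np_j})$. -/

import Mathlib

open MeasureTheory ProbabilityTheory Real Filter Topology ENNReal


lemma pow_div_fact_le {x : ℝ} (hx : 0 ≤ x) {k : ℕ} (hk : 1 ≤ k) :
    x ^ k / k.factorial ≤ Real.exp x - 1 := by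
  have h := Real.sum_le_exp_of_nonneg hx (k+1)
  have hsub : ({0, k} : Finset ℕ) ⊆ Finset.range (k+1) := by
    intro i hi; simp at hi; rcases hi with h|h <;> simp [h] <;> omega
  have h2 : ∑ i ∈ ({0, k} : Finset ℕ), x ^ i / i.factorial
      ≤ ∑ i ∈ Finset.range (k+1), x ^ i / i.factorial := by
    apply Finset.sum_le_sum_of_subset_of_nonneg hsub
    intro i _ _; positivity
  rw [Finset.sum_pair (by omega : (0:ℕ) ≠ k)] at h2
  simp at h2
  linarith

lemma series_bound {x t : ℝ} (hx : 0 < x) (ht0 : 0 < t) (ht1 : t < 1) :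
    Real.exp (t*x) - 1 - t*x ≤ (Real.exp x - 1) * (t^2 / (1 - t)) := by
  have hs : HasSum (fun k : ℕ => (t*x)^k / k.factorial) (Real.exp (t*x)) := by
    rw [Real.exp_eq_exp_ℝ]
    exact NormedSpace.expSeries_div_hasSum_exp (t*x)
  have hsum := hs.summable
  have htail : ∑' k : ℕ, (t*x)^(k+2) / (k+2).factorial
      = Real.exp (t*x) - 1 - t*x := by
    have := Summable.sum_add_tsum_nat_add 2 hsum
    rw [hs.tsum_eq] at this
    simp [Finset.sum_range_succ] at this
    linarith
  have hgeo : Summable (fun k : ℕ => (Real.exp x - 1) * t^(k+2)) := by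
    apply Summable.mul_left
    exact ((summable_geometric_of_lt_one ht0.le ht1).mul_left (t^2)).congr
      (fun k => by rw [← pow_add]; ring_nf)
  have hterm : ∀ k : ℕ, (t*x)^(k+2) / (k+2).factorial ≤ (Real.exp x - 1) * t^(k+2) := by
    intro k
    have h1 : x^(k+2) / (k+2).factorial ≤ Real.exp x - 1 :=
      pow_div_fact_le hx.le (by omega)
    have ht2 : (0:ℝ) ≤ t^(k+2) := by positivity
    calc (t*x)^(k+2) / (k+2).factorial = t^(k+2) * (x^(k+2) / (k+2).factorial) := by ring
    _ ≤ t^(k+2) * (Real.exp x - 1) := by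
        apply mul_le_mul_of_nonneg_left h1 ht2
    _ = (Real.exp x - 1) * t^(k+2) := by ring
  have hlsum : Summable (fun k : ℕ => (t*x)^(k+2) / (k+2).factorial) :=
    (summable_nat_add_iff 2).2 hsum
  have := Summable.tsum_le_tsum hterm hlsum hgeo
  rw [htail] at this
  have hg : ∑' k : ℕ, (Real.exp x - 1) * t^(k+2) = (Real.exp x - 1) * (t^2/(1-t)) := by
    rw [tsum_mul_left]
    congr 1
    have : ∑' k : ℕ, t^(k+2) = t^2 * ∑' k : ℕ, t^k := by
      rw [← tsum_mul_left]; congr 1; ext k; ring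
    rw [this, tsum_geometric_of_lt_one ht0.le ht1]
    ring
  rw [hg] at this
  exact this

lemma pow_one_sub_le {p : ℝ} (hp0 : 0 ≤ p) (hp1 : p ≤ 1) (k : ℕ) :
    (1 - p)^k ≤ Real.exp (-(k:ℝ) * p) := by
  have h1 : 1 - p ≤ Real.exp (-p) := by linarith only [Real.add_one_le_exp (-p)]
  calc (1-p)^k ≤ (Real.exp (-p))^k := pow_le_pow_left₀ (by linarith) h1 k
  _ = Real.exp (-(k:ℝ)*p) := by rw [← Real.exp_nat_mul]; ring_nf

lemma mul_exp_neg_le {x : ℝ} (hx : 0 ≤ x) : x * Real.exp (-x) ≤ 1 - Real.exp (-x) := by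
  have h := Real.add_one_le_exp x
  have he := Real.exp_pos (-x)
  have : (x + 1) * Real.exp (-x) ≤ 1 := by
    have : Real.exp x * Real.exp (-x) = 1 := by rw [← Real.exp_add]; simp
    nlinarith
  nlinarith

lemma exp_neg_quad {y : ℝ} (hy0 : 0 ≤ y) (hy1 : y ≤ 1) :
    Real.exp (-y) - 1 + y ≤ (3/4) * y^2 := by
  have h := Real.exp_bound (x := -y) (by rw [abs_neg, abs_of_nonneg hy0]; exact hy1)
    (n := 2) (by norm_num)
  rw [abs_neg, abs_of_nonneg hy0] at h
  have h2 : ∑ i ∈ Finset.range 2, (-y)^i / i.factorial = 1 - y := by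
    simp [Finset.sum_range_succ]; ring
  rw [h2] at h
  have h3 := (abs_le.1 h).2
  have hc : (((Nat.succ 2):ℝ)) / (((Nat.factorial 2):ℝ) * (2:ℕ)) = 3/4 := by
    norm_num [Nat.factorial]
  rw [hc] at h3
  nlinarith [h3]

set_option maxHeartbeats 1000000 in
lemma key_ineq {n : ℕ} (hn : 2 ≤ n) {p lam : ℝ} (hp0 : 0 < p) (hp1 : p < 1)
    (hl0 : 0 < lam) (hl1 : lam < (n:ℝ) - 1) :
    1 + (1-p)^n * (Real.exp (lam * p) - 1)
      + ((n:ℝ) * p * (1-p)^(n-1)) * (Real.exp (-lam / n) - 1)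
    ≤ Real.exp (lam * ((1-p)^n * p - ((n:ℝ) * p * (1-p)^(n-1)) / n)
        + 4 / ((n:ℝ)-1)^2 * lam^2 / (2 * (1 - lam / ((n:ℝ)-1)))
          * (1 - Real.exp (-(n:ℝ) * p))) := by
  set m : ℝ := (n:ℝ) with hmdef
  have hm : (2:ℝ) ≤ m := by rw [hmdef]; exact_mod_cast hn
  have hm1pos : (0:ℝ) < m - 1 := by linarith
  have hmpos : (0:ℝ) < m := by linarith
  have hlm : lam < m := by linarith
  have hd2 : 0 < 1 - lam / (m-1) := by
    rw [sub_pos, div_lt_one hm1pos]; exact hl1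
  have hd2le : 1 - lam / (m-1) ≤ 1 := by
    have : 0 ≤ lam / (m-1) := by positivity
    linarith
  have hd1 : 0 < 1 - lam / m := by
    rw [sub_pos, div_lt_one hmpos]; exact hlm
  have h1p0 : (0:ℝ) ≤ 1 - p := by linarith
  have hq0nn : (0:ℝ) ≤ (1-p)^n := pow_nonneg h1p0 n
  have hq1nn : (0:ℝ) ≤ m * p * (1-p)^(n-1) := by positivity
  have hgnn : 0 ≤ 1 - Real.exp (-m * p) := by
    have : Real.exp (-m*p) ≤ 1 := by
      rw [Real.exp_le_one_iff]; nlinarith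
    linarith
  set g : ℝ := 1 - Real.exp (-m * p) with hgdef
  -- bound on A' := (1-p)^n * (exp(lam p) - 1 - lam p)
  have hq0exp : (1-p)^n ≤ Real.exp (-m * p) := pow_one_sub_le hp0.le hp1.le n
  have hphi0 : 0 ≤ Real.exp (lam * p) - 1 - lam * p := by
    linarith [Real.add_one_le_exp (lam * p)]
  have hseries := series_bound (x := m * p) (t := lam / m) (by positivity)
    (by positivity) (by rw [div_lt_one hmpos]; exact hlm)
  rw [show lam / m * (m * p) = lam * p by field_simp] at hseries
  have hA1 : (1-p)^n * (Real.exp (lam * p) - 1 - lam * p)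
      ≤ Real.exp (-m*p) * ((Real.exp (m*p) - 1) * ((lam/m)^2 / (1 - lam/m))) := by
    apply mul_le_mul hq0exp hseries hphi0 (Real.exp_pos _).le
  have hexpmul : Real.exp (-m*p) * (Real.exp (m*p) - 1) = g := by
    rw [hgdef, mul_sub, ← Real.exp_add]
    ring_nf
    simp [Real.exp_zero]
  have hA2 : Real.exp (-m*p) * ((Real.exp (m*p) - 1) * ((lam/m)^2 / (1 - lam/m)))
      = g * ((lam/m)^2 / (1 - lam/m)) := by
    rw [← hexpmul]; ring
  -- compare the two "geometric" factors
  have hgeofac : (lam/m)^2 / (1 - lam/m) ≤ lam^2 / ((m-1)^2 * (1 - lam/(m-1))) := by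
    rw [div_le_div_iff₀ (by positivity) (by positivity)]
    have e1 : (lam/m)^2 = lam^2 / m^2 := by ring
    rw [e1]
    rw [div_mul_eq_mul_div, div_le_iff₀ (by positivity)]
    have key : (m-1)^2 * (1 - lam/(m-1)) ≤ m^2 * (1 - lam/m) := by
      have e2 : (m-1)^2 * (1 - lam/(m-1)) = (m-1)^2 - lam * (m-1) := by
        field_simp
      have e3 : m^2 * (1 - lam/m) = m^2 - lam * m := by
        field_simp
      rw [e2, e3]; nlinarith
    nlinarith [sq_nonneg lam, mul_nonneg (sq_nonneg lam) (mul_nonneg (sq_nonneg (m-1)) hd2.le)]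
  have hA : (1-p)^n * (Real.exp (lam * p) - 1 - lam * p)
      ≤ g * (lam^2 / ((m-1)^2 * (1 - lam/(m-1)))) := by
    calc (1-p)^n * (Real.exp (lam * p) - 1 - lam * p)
        ≤ g * ((lam/m)^2 / (1 - lam/m)) := by rw [← hA2]; exact hA1
    _ ≤ g * (lam^2 / ((m-1)^2 * (1 - lam/(m-1)))) :=
        mul_le_mul_of_nonneg_left hgeofac hgnn
  -- bound on B' := q1 * (exp(-lam/m) - 1 + lam/m)
  have hquad := exp_neg_quad (y := lam/m) (by positivity)
    (by rw [div_le_one hmpos]; linarith)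
  have hBnn : 0 ≤ Real.exp (-(lam/m)) - 1 + lam/m := by
    linarith [Real.add_one_le_exp (-(lam/m))]
  have hB1 : m * p * (1-p)^(n-1) * (Real.exp (-(lam/m)) - 1 + lam/m)
      ≤ m * p * (1-p)^(n-1) * ((3/4) * (lam/m)^2) :=
    mul_le_mul_of_nonneg_left hquad hq1nn
  -- p * (1-p)^(n-1) ≤ g / (m-1)
  have hcast : ((n-1 : ℕ) : ℝ) = m - 1 := by
    rw [hmdef]; push_cast [Nat.cast_sub (by omega : 1 ≤ n)]; ring
  have hpow1 : (1-p)^(n-1) ≤ Real.exp (-(m-1) * p) := by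
    have := pow_one_sub_le hp0.le hp1.le (n-1)
    rwa [hcast] at this
  have hxe : (m-1) * p * Real.exp (-((m-1)*p)) ≤ 1 - Real.exp (-((m-1)*p)) :=
    mul_exp_neg_le (by positivity)
  have hmono : Real.exp (-m * p) ≤ Real.exp (-((m-1)*p)) := by
    apply Real.exp_le_exp.2; nlinarith
  have hpg : p * (1-p)^(n-1) ≤ g / (m-1) := by
    rw [le_div_iff₀ hm1pos]
    have e4 : Real.exp (-(m-1)*p) = Real.exp (-((m-1)*p)) := by ring_nf
    have hpow1' : (1-p)^(n-1) ≤ Real.exp (-((m-1)*p)) := by rw [e4] at hpow1; exact hpow1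
    calc p * (1-p)^(n-1) * (m-1) ≤ p * Real.exp (-((m-1)*p)) * (m-1) :=
          mul_le_mul_of_nonneg_right (mul_le_mul_of_nonneg_left hpow1' hp0.le) hm1pos.le
    _ = (m-1) * p * Real.exp (-((m-1)*p)) := by ring
    _ ≤ 1 - Real.exp (-((m-1)*p)) := hxe
    _ ≤ g := by rw [hgdef]; linarith
  have hB : m * p * (1-p)^(n-1) * (Real.exp (-(lam/m)) - 1 + lam/m)
      ≤ (3/4) * (lam^2 / m) * (g / (m-1)) := by
    calc m * p * (1-p)^(n-1) * (Real.exp (-(lam/m)) - 1 + lam/m)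
        ≤ m * p * (1-p)^(n-1) * ((3/4) * (lam/m)^2) := hB1
    _ = (3/4) * (lam^2 / m) * (p * (1-p)^(n-1)) := by
        rw [div_pow]
        field_simp
    _ ≤ (3/4) * (lam^2 / m) * (g / (m-1)) := by
        apply mul_le_mul_of_nonneg_left hpg (by positivity)
  -- total: A' + B' ≤ Kc * g
  have hKcid : ∀ (D E G L : ℝ), D ≠ 0 → E ≠ 0 →
      4 / D * L^2 / (2*E) * G = 2 * (G * (L^2/(D*E))) := by
    intro D E G L hD hE; field_simp; ring
  have hKc : 4 / (m-1)^2 * lam^2 / (2 * (1 - lam/(m-1))) * g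
      = 2 * (g * (lam^2 / ((m-1)^2 * (1 - lam/(m-1))))) :=
    hKcid _ _ _ _ (by positivity) hd2.ne'
  have hcnn : 0 ≤ lam^2 / ((m-1)^2 * (1 - lam/(m-1))) := by positivity
  have hfrac : lam^2 / (m*(m-1)) ≤ lam^2 / ((m-1)^2 * (1 - lam/(m-1))) := by
    apply div_le_div_of_nonneg_left (sq_nonneg lam) (by positivity)
    calc (m-1)^2 * (1 - lam/(m-1)) ≤ (m-1)^2 * 1 :=
          mul_le_mul_of_nonneg_left hd2le (by positivity)
    _ ≤ m * (m-1) := by nlinarith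
  have hBfin : (3/4) * (lam^2 / m) * (g / (m-1))
      ≤ g * (lam^2 / ((m-1)^2 * (1 - lam/(m-1)))) := by
    have e : (3:ℝ)/4 * (lam^2/m) * (g/(m-1)) = (3/4) * g * (lam^2/(m*(m-1))) := by
      field_simp [hmpos.ne', hm1pos.ne']
    rw [e]
    calc (3:ℝ)/4 * g * (lam^2/(m*(m-1)))
        ≤ (3/4) * g * (lam^2 / ((m-1)^2 * (1 - lam/(m-1)))) :=
          mul_le_mul_of_nonneg_left hfrac (by positivity)
    _ ≤ g * (lam^2 / ((m-1)^2 * (1 - lam/(m-1)))) := by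
        nlinarith [mul_nonneg hgnn hcnn]
  have hRtot : (1-p)^n * (Real.exp (lam * p) - 1 - lam * p)
      + m * p * (1-p)^(n-1) * (Real.exp (-(lam/m)) - 1 + lam/m)
      ≤ 4 / (m-1)^2 * lam^2 / (2 * (1 - lam/(m-1))) * g := by
    rw [hKc]
    linarith [hA, hB, hBfin]
  have hexp1 : 1 + (1-p)^n * (Real.exp (lam*p) - 1)
      + m * p * (1-p)^(n-1) * (Real.exp (-lam/m) - 1)
      = 1 + (lam * ((1-p)^n * p - (m * p * (1-p)^(n-1)) / m)
        + ((1-p)^n * (Real.exp (lam * p) - 1 - lam * p)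
          + m * p * (1-p)^(n-1) * (Real.exp (-(lam/m)) - 1 + lam/m))) := by
    rw [show -lam/m = -(lam/m) by ring]
    field_simp
    ring
  rw [hexp1]
  calc 1 + (lam * ((1-p)^n * p - (m * p * (1-p)^(n-1)) / m)
        + ((1-p)^n * (Real.exp (lam * p) - 1 - lam * p)
          + m * p * (1-p)^(n-1) * (Real.exp (-(lam/m)) - 1 + lam/m)))
      ≤ Real.exp (lam * ((1-p)^n * p - (m * p * (1-p)^(n-1)) / m)
        + ((1-p)^n * (Real.exp (lam * p) - 1 - lam * p)
          + m * p * (1-p)^(n-1) * (Real.exp (-(lam/m)) - 1 + lam/m))) := by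
        linarith [Real.add_one_le_exp (lam * ((1-p)^n * p - (m * p * (1-p)^(n-1)) / m)
          + ((1-p)^n * (Real.exp (lam * p) - 1 - lam * p)
            + m * p * (1-p)^(n-1) * (Real.exp (-(lam/m)) - 1 + lam/m)))]
  _ ≤ Real.exp (lam * ((1-p)^n * p - (m * p * (1-p)^(n-1)) / m)
        + 4 / (m-1)^2 * lam^2 / (2 * (1 - lam/(m-1))) * g) := by
      apply Real.exp_le_exp.2
      linarith [hRtot]


lemma integral_three_val {Ω : Type*} [MeasurableSpace Ω] (μ : Measure Ω) [IsProbabilityMeasure μ]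
    {X : Ω → ℕ} (hX : Measurable X) (a b c q0 q1 : ℝ)
    (h0 : μ {ω | X ω = 0} = ENNReal.ofReal q0) (h1 : μ {ω | X ω = 1} = ENNReal.ofReal q1)
    (hq0 : 0 ≤ q0) (hq1 : 0 ≤ q1) :
    ∫ ω, (if X ω = 0 then a else if X ω = 1 then b else c) ∂μ
      = c + q0 * (a - c) + q1 * (b - c) := by
  have hs0 : MeasurableSet {ω | X ω = 0} := hX (measurableSet_singleton 0)
  have hs1 : MeasurableSet {ω | X ω = 1} := hX (measurableSet_singleton 1)
  have hptw : ∀ ω, (if X ω = 0 then a else if X ω = 1 then b else c)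
      = c + Set.indicator {ω | X ω = 0} (fun _ => a - c) ω
          + Set.indicator {ω | X ω = 1} (fun _ => b - c) ω := by
    intro ω
    by_cases e0 : X ω = 0
    · rw [if_pos e0, Set.indicator_of_mem (by simpa using e0),
        Set.indicator_of_notMem (by simp [e0])]
      ring
    · by_cases e1 : X ω = 1
      · rw [if_neg e0, if_pos e1, Set.indicator_of_notMem (by simp [e1, e0]),
          Set.indicator_of_mem (by simpa using e1)]
        ring
      · rw [if_neg e0, if_neg e1, Set.indicator_of_notMem (by simpa using e0),
          Set.indicator_of_notMem (by simpa using e1)]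
        ring
  simp_rw [hptw]
  have hi0 : Integrable (Set.indicator {ω | X ω = 0} (fun _ => a - c)) μ :=
    (integrable_const (a - c)).indicator hs0
  have hi1 : Integrable (Set.indicator {ω | X ω = 1} (fun _ => b - c)) μ :=
    (integrable_const (b - c)).indicator hs1
  rw [integral_add (f := fun ω => c + Set.indicator {ω | X ω = 0} (fun _ => a - c) ω)
      (g := fun ω => Set.indicator {ω | X ω = 1} (fun _ => b - c) ω)
      ((integrable_const c).add hi0) hi1,
    integral_add (f := fun _ => c)
      (g := fun ω => Set.indicator {ω | X ω = 0} (fun _ => a - c) ω)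
      (integrable_const c) hi0, integral_const,
    integral_indicator_const _ hs0, integral_indicator_const _ hs1, measureReal_def, measureReal_def, measureReal_def, h0, h1,
    ENNReal.toReal_ofReal hq0, ENNReal.toReal_ofReal hq1]
  simp [measure_univ, smul_eq_mul]

set_option maxHeartbeats 2000000 in
theorem stmt
    {Ω : Type*} [MeasurableSpace Ω] (μ : Measure Ω) [IsProbabilityMeasure μ]
    (p : ℕ → ℝ) (hp : ∀ j, p j ∈ Set.Ioo (0 : ℝ) 1) (hsum : Summable p)
    (n : ℕ) (X : ℕ → Ω → ℕ)
    (hmeas : ∀ j, Measurable (X j))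
    (hindep : iIndepFun X μ)
    (hbin : ∀ j k, μ {ω | X j ω = k} =
      ENNReal.ofReal ((n.choose k : ℝ) * p j ^ k * (1 - p j) ^ (n - k)))
    (hn : 2 ≤ n) :
    ∀ lam : ℝ, 0 < lam → lam < (n : ℝ) - 1 →
      Real.log (∫ ω, Real.exp (-lam *
          (((∑' j, if X j ω = 1 then (1 : ℝ) else 0) / n
              - ∑' j, if X j ω = 0 then p j else 0)
            - ∫ ω', ((∑' j, if X j ω' = 1 then (1 : ℝ) else 0) / n
              - ∑' j, if X j ω' = 0 then p j else 0) ∂μ)) ∂μ)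
        ≤ ((4 / ((n : ℝ) - 1) ^ 2) * ∑' j, (1 - Real.exp (-(n : ℝ) * p j)))
          * lam ^ 2 / (2 * (1 - lam / ((n : ℝ) - 1))) := by
  intro lam hl0 hl1
  classical
  set m : ℝ := (n : ℝ) with hmdef
  have hm : (2:ℝ) ≤ m := by rw [hmdef]; exact_mod_cast hn
  have hmpos : (0:ℝ) < m := by linarith
  have hm1pos : (0:ℝ) < m - 1 := by linarith
  -- coordinate summands
  set Z : ℕ → Ω → ℝ :=
    fun j => (fun k : ℕ => if k = 0 then p j else if k = 1 then -(1/m) else 0) ∘ X j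
    with hZdef
  have hZapp : ∀ j ω, Z j ω = if X j ω = 0 then p j else if X j ω = 1 then -(1/m) else 0 :=
    fun j ω => rfl
  have hZmeas : ∀ j, Measurable (Z j) :=
    fun j => (Measurable.of_discrete).comp (hmeas j)
  have hZle : ∀ j ω, Z j ω ≤ p j := by
    intro j ω
    rw [hZapp]
    have h1 := (hp j).1
    have : (0:ℝ) < 1/m := by positivity
    split_ifs <;> linarith
  -- probabilities of {X j = 0} and {X j = 1}
  have h0 : ∀ j, μ {ω | X j ω = 0} = ENNReal.ofReal ((1 - p j)^n) := by
    intro j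
    have := hbin j 0
    simpa using this
  have h1m : ∀ j, μ {ω | X j ω = 1} = ENNReal.ofReal (m * p j * (1 - p j)^(n-1)) := by
    intro j
    have := hbin j 1
    rw [hmdef]
    simpa using this
  have hq0nn : ∀ j, (0:ℝ) ≤ (1 - p j)^n :=
    fun j => pow_nonneg (by linarith [(hp j).2]) n
  have hq1nn : ∀ j, (0:ℝ) ≤ m * p j * (1 - p j)^(n-1) := by
    intro j
    have := (hp j).1; have := (hp j).2
    have : (0:ℝ) ≤ (1 - p j)^(n-1) := pow_nonneg (by linarith [(hp j).2]) _
    positivity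
  have hpow_le_one : ∀ j (k : ℕ), (1 - p j)^k ≤ 1 :=
    fun j k => pow_le_one₀ (by linarith [(hp j).2]) (by linarith [(hp j).1])
  -- expectation and bonus constants
  set e : ℕ → ℝ := fun j => (1 - p j)^n * p j - (m * p j * (1 - p j)^(n-1)) / m with hedef
  set c : ℕ → ℝ :=
    fun j => 4 / (m-1)^2 * lam^2 / (2 * (1 - lam / (m-1))) * (1 - Real.exp (-m * p j))
    with hcdef
  -- single coordinate integral computations
  have hMGF : ∀ j, ∫ ω, Real.exp (lam * Z j ω) ∂μ
      = 1 + (1 - p j)^n * (Real.exp (lam * p j) - 1)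
        + (m * p j * (1 - p j)^(n-1)) * (Real.exp (-lam/m) - 1) := by
    intro j
    have hptw : ∀ ω, Real.exp (lam * Z j ω)
        = if X j ω = 0 then Real.exp (lam * p j)
          else if X j ω = 1 then Real.exp (-lam/m) else 1 := by
      intro ω
      rw [hZapp]
      split_ifs
      · rfl
      · rw [show lam * -(1/m) = -lam/m by ring]
      · rw [mul_zero, Real.exp_zero]
    simp_rw [hptw]
    rw [integral_three_val μ (hmeas j) _ _ _ _ _ (h0 j) (h1m j) (hq0nn j) (hq1nn j)]
  have hEZ : ∀ j, ∫ ω, Z j ω ∂μ = e j := by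
    intro j
    simp_rw [hZapp]
    rw [integral_three_val μ (hmeas j) _ _ _ _ _ (h0 j) (h1m j) (hq0nn j) (hq1nn j), hedef]
    ring
  -- key one coordinate bound
  have hkey : ∀ j, ∫ ω, Real.exp (lam * Z j ω) ∂μ ≤ Real.exp (lam * e j + c j) := by
    intro j
    rw [hMGF j]
    have hkl := key_ineq hn (hp j).1 (hp j).2 hl0 (by rw [← hmdef]; exact hl1)
    rw [← hmdef] at hkl
    calc 1 + (1 - p j)^n * (Real.exp (lam * p j) - 1)
        + (m * p j * (1 - p j)^(n-1)) * (Real.exp (-lam/m) - 1)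
        ≤ Real.exp (lam * ((1 - p j)^n * p j - (m * p j * (1 - p j)^(n-1)) / m)
            + 4 / (m-1)^2 * lam^2 / (2 * (1 - lam / (m-1)))
              * (1 - Real.exp (-m * p j))) := hkl
    _ = Real.exp (lam * e j + c j) := by rw [hedef, hcdef]
  -- independence of the Z's
  have hZindep : iIndepFun Z μ :=
    hindep.comp _ (fun j => Measurable.of_discrete)
  -- product formula for finite sums
  have hprodN : ∀ N : ℕ, ∫ ω, Real.exp (lam * ∑ j ∈ Finset.range N, Z j ω) ∂μ
      = ∏ j ∈ Finset.range N, ∫ ω, Real.exp (lam * Z j ω) ∂μ := by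
    intro N
    have := hZindep.mgf_sum hZmeas (Finset.range N) (t := lam)
    simp only [mgf, Finset.sum_apply] at this
    exact this
  -- Borel-Cantelli
  have hBC : ∀ᵐ ω ∂μ, ∀ᶠ j in atTop, X j ω ≠ 1 := by
    have hfin : (∑' j, μ {ω | X j ω = 1}) ≠ ⊤ := by
      have hle : (∑' j, μ {ω | X j ω = 1}) ≤ ∑' j, ENNReal.ofReal (m * p j) := by
        apply ENNReal.tsum_le_tsum
        intro j
        rw [h1m j]
        apply ENNReal.ofReal_le_ofReal
        calc m * p j * (1 - p j)^(n-1) ≤ m * p j * 1 := by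
              apply mul_le_mul_of_nonneg_left (hpow_le_one j _) (mul_nonneg hmpos.le (hp j).1.le)
        _ = m * p j := by ring
      have heq : ∑' j, ENNReal.ofReal (m * p j) = ENNReal.ofReal (∑' j, m * p j) :=
        (ENNReal.ofReal_tsum_of_nonneg (fun j => mul_nonneg hmpos.le (hp j).1.le) (hsum.mul_left m)).symm
      rw [heq] at hle
      exact (lt_of_le_of_lt hle ENNReal.ofReal_lt_top).ne
    have := MeasureTheory.ae_eventually_notMem (s := fun j => {ω | X j ω = 1}) hfin
    filter_upwards [this] with ω hω
    filter_upwards [hω] with j hj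
    simpa using hj
  -- almost-sure summability of the Z's
  have hsummableZ : ∀ᵐ ω ∂μ, Summable (fun j => Z j ω) := by
    filter_upwards [hBC] with ω hω
    obtain ⟨N, hN⟩ := eventually_atTop.1 hω
    have hdecomp : ∀ j, Z j ω = (if X j ω = 0 then p j else 0)
        + (if X j ω = 1 then -(1/m) else 0) := by
      intro j
      rw [hZapp]
      by_cases h0' : X j ω = 0
      · simp [h0']
      · by_cases h1' : X j ω = 1
        · simp [h0', h1']
        · simp [h0', h1']
    rw [show (fun j => Z j ω) = fun j => (if X j ω = 0 then p j else 0)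
        + (if X j ω = 1 then -(1/m) else 0) from funext hdecomp]
    apply Summable.add
    · apply Summable.of_nonneg_of_le ?_ ?_ hsum
      · intro j; split_ifs; exacts [(hp j).1.le, le_rfl]
      · intro j; split_ifs; exacts [le_rfl, (hp j).1.le]
    · apply (summable_nat_add_iff N).1
      apply Summable.congr summable_zero
      intro k
      rw [if_neg (hN (k + N) (Nat.le_add_left N k))]
  set S : Ω → ℝ := fun ω => ∑' j, Z j ω with hSdef
  have htendS : ∀ᵐ ω ∂μ, Tendsto (fun N => ∑ j ∈ Finset.range N, Z j ω) atTop (𝓝 (S ω)) := by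
    filter_upwards [hsummableZ] with ω hω
    exact hω.hasSum.tendsto_sum_nat
  have hSle : ∀ᵐ ω ∂μ, S ω ≤ ∑' j, p j := by
    filter_upwards [hsummableZ] with ω hω
    exact Summable.tsum_le_tsum (fun j => hZle j ω) hω hsum
  have hSNle : ∀ (N : ℕ) (ω : Ω), ∑ j ∈ Finset.range N, Z j ω ≤ ∑' j, p j := by
    intro N ω
    calc ∑ j ∈ Finset.range N, Z j ω ≤ ∑ j ∈ Finset.range N, p j :=
          Finset.sum_le_sum (fun j _ => hZle j ω)
    _ ≤ ∑' j, p j := Summable.sum_le_tsum _ (fun j _ => (hp j).1.le) hsum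
  -- dominated convergence
  have hSNmeas : ∀ N : ℕ, AEStronglyMeasurable (fun ω => Real.exp (lam * ∑ j ∈ Finset.range N, Z j ω)) μ := by
    intro N
    have hms : Measurable (fun ω => ∑ j ∈ Finset.range N, Z j ω) :=
      Finset.measurable_sum _ (fun j _ => hZmeas j)
    exact ((measurable_const.mul hms).exp).aestronglyMeasurable
  have hDCT : Tendsto (fun N => ∫ ω, Real.exp (lam * ∑ j ∈ Finset.range N, Z j ω) ∂μ)
      atTop (𝓝 (∫ ω, Real.exp (lam * S ω) ∂μ)) := by
    apply tendsto_integral_of_dominated_convergence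
      (bound := fun _ => Real.exp (lam * ∑' j, p j)) hSNmeas (integrable_const _)
    · intro N
      filter_upwards with ω
      rw [Real.norm_eq_abs, Real.abs_exp]
      exact Real.exp_le_exp.2 (mul_le_mul_of_nonneg_left (hSNle N ω) hl0.le)
    · filter_upwards [htendS] with ω hω
      exact (Real.continuous_exp.tendsto _).comp (hω.const_mul lam)
  -- summability of e and c
  have heabs : ∀ j, |e j| ≤ 2 * p j := by
    intro j
    have h1 : m * p j * (1 - p j)^(n-1) / m = p j * (1 - p j)^(n-1) := by
      field_simp
    rw [hedef]
    dsimp only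
    rw [h1, abs_le]
    have hb1 : (0:ℝ) ≤ (1 - p j)^n := hq0nn j
    have hb2 : (1 - p j)^n ≤ 1 := hpow_le_one j n
    have hb3 : (0:ℝ) ≤ (1 - p j)^(n-1) := pow_nonneg (by linarith [(hp j).2]) _
    have hb4 : (1 - p j)^(n-1) ≤ 1 := hpow_le_one j _
    have hpj := (hp j).1
    constructor <;> nlinarith
  have hesum : Summable e :=
    Summable.of_norm_bounded (hsum.mul_left 2) (fun j => by
      rw [Real.norm_eq_abs]; exact heabs j)
  have hgnn : ∀ j, (0:ℝ) ≤ 1 - Real.exp (-m * p j) := by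
    intro j
    have : Real.exp (-m * p j) ≤ 1 := by
      rw [Real.exp_le_one_iff]
      nlinarith [(hp j).1]
    linarith
  have hgle : ∀ j, 1 - Real.exp (-m * p j) ≤ m * p j := by
    intro j
    nlinarith [Real.add_one_le_exp (-m * p j)]
  have hgsum : Summable (fun j => 1 - Real.exp (-m * p j)) :=
    Summable.of_nonneg_of_le hgnn hgle (hsum.mul_left m)
  have hcsum : Summable c := by
    rw [hcdef]
    exact hgsum.mul_left _
  -- per-N inequality
  have hNineq : ∀ N : ℕ, ∫ ω, Real.exp (lam * ∑ j ∈ Finset.range N, Z j ω) ∂μ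
      ≤ Real.exp (∑ j ∈ Finset.range N, (lam * e j + c j)) := by
    intro N
    rw [hprodN N, Real.exp_sum]
    apply Finset.prod_le_prod
    · intro j _
      exact integral_nonneg (fun ω => (Real.exp_pos _).le)
    · intro j _
      exact hkey j
  -- limit of the bounds
  have hboundtend : Tendsto (fun N => Real.exp (∑ j ∈ Finset.range N, (lam * e j + c j)))
      atTop (𝓝 (Real.exp (lam * ∑' j, e j + ∑' j, c j))) := by
    have hsum2 : Summable (fun j => lam * e j + c j) := (hesum.mul_left lam).add hcsum
    have h1 : Tendsto (fun N => ∑ j ∈ Finset.range N, (lam * e j + c j)) atTop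
        (𝓝 (∑' j, (lam * e j + c j))) := hsum2.hasSum.tendsto_sum_nat
    have h2 : ∑' j, (lam * e j + c j) = lam * ∑' j, e j + ∑' j, c j := by
      rw [Summable.tsum_add (hesum.mul_left lam) hcsum, tsum_mul_left]
    rw [h2] at h1
    exact (Real.continuous_exp.tendsto _).comp h1
  have hfinal1 : ∫ ω, Real.exp (lam * S ω) ∂μ ≤ Real.exp (lam * ∑' j, e j + ∑' j, c j) :=
    le_of_tendsto_of_tendsto' hDCT hboundtend hNineq
  -- integral of S
  have hlint : ∀ j, ∫⁻ ω, ‖Z j ω‖₊ ∂μ ≤ ENNReal.ofReal (2 * p j) := by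
    intro j
    have hs0 : MeasurableSet {ω | X j ω = 0} := (hmeas j) (measurableSet_singleton 0)
    have hs1 : MeasurableSet {ω | X j ω = 1} := (hmeas j) (measurableSet_singleton 1)
    have hptw : ∀ ω, (‖Z j ω‖₊ : ℝ≥0∞)
        ≤ Set.indicator {ω | X j ω = 0} (fun _ => ENNReal.ofReal (p j)) ω
          + Set.indicator {ω | X j ω = 1} (fun _ => ENNReal.ofReal (1/m)) ω := by
      intro ω
      rw [show (‖Z j ω‖₊ : ℝ≥0∞) = ENNReal.ofReal ‖Z j ω‖ from (ENNReal.ofReal_eq_coe_nnreal (norm_nonneg _)).symm, Real.norm_eq_abs, hZapp]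
      by_cases e0 : X j ω = 0
      · rw [if_pos e0, Set.indicator_of_mem (by simpa using e0), abs_of_nonneg (hp j).1.le]
        exact le_add_of_le_of_nonneg le_rfl zero_le
      · by_cases e1 : X j ω = 1
        · rw [if_neg e0, if_pos e1, Set.indicator_of_notMem (by simp [e1]),
            Set.indicator_of_mem (by simpa using e1), abs_neg,
            abs_of_nonneg (by positivity : (0:ℝ) ≤ 1/m)]
          simp
        · rw [if_neg e0, if_neg e1]
          simp
    calc ∫⁻ ω, ‖Z j ω‖₊ ∂μ
        ≤ ∫⁻ ω, (Set.indicator {ω | X j ω = 0} (fun _ => ENNReal.ofReal (p j)) ω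
          + Set.indicator {ω | X j ω = 1} (fun _ => ENNReal.ofReal (1/m)) ω) ∂μ :=
          lintegral_mono hptw
    _ = ENNReal.ofReal (p j) * μ {ω | X j ω = 0} + ENNReal.ofReal (1/m) * μ {ω | X j ω = 1} := by
        rw [lintegral_add_left (measurable_const.indicator hs0),
          lintegral_indicator_const hs0, lintegral_indicator_const hs1]
    _ ≤ ENNReal.ofReal (p j) * 1 + ENNReal.ofReal (1/m) * ENNReal.ofReal (m * p j) := by
        apply add_le_add
        · exact mul_le_mul_right prob_le_one _
        · apply mul_le_mul_right
          rw [h1m j]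
          apply ENNReal.ofReal_le_ofReal
          calc m * p j * (1 - p j)^(n-1) ≤ m * p j * 1 :=
                mul_le_mul_of_nonneg_left (hpow_le_one j _) (mul_nonneg hmpos.le (hp j).1.le)
          _ = m * p j := by ring
    _ = ENNReal.ofReal (2 * p j) := by
        rw [mul_one, ← ENNReal.ofReal_mul (by positivity)]
        rw [show 1/m * (m * p j) = p j by field_simp]
        rw [← ENNReal.ofReal_add (hp j).1.le (hp j).1.le]
        congr 1
        ring
  have hES : ∫ ω, S ω ∂μ = ∑' j, e j := by
    rw [hSdef]
    rw [integral_tsum (fun j => (hZmeas j).aestronglyMeasurable) ?_]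
    · exact tsum_congr hEZ
    · apply ne_of_lt
      calc ∑' j, ∫⁻ ω, ‖Z j ω‖₊ ∂μ ≤ ∑' j, ENNReal.ofReal (2 * p j) :=
            ENNReal.tsum_le_tsum hlint
      _ = ENNReal.ofReal (∑' j, 2 * p j) :=
            (ENNReal.ofReal_tsum_of_nonneg (fun j => by linarith [(hp j).1]) (hsum.mul_left 2)).symm
      _ < ⊤ := ENNReal.ofReal_lt_top
  -- relate T to S
  set T : Ω → ℝ := fun ω => (∑' j, if X j ω = 1 then (1:ℝ) else 0) / m
      - ∑' j, (if X j ω = 0 then p j else 0) with hTdef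
  have hTS : ∀ᵐ ω ∂μ, T ω = - S ω := by
    filter_upwards [hBC] with ω hω
    obtain ⟨N, hN⟩ := eventually_atTop.1 hω
    have hu : Summable (fun j => if X j ω = 1 then (1:ℝ) else 0) := by
      apply (summable_nat_add_iff N).1
      apply Summable.congr summable_zero
      intro k
      rw [if_neg (hN (k + N) (Nat.le_add_left N k))]
    have hv : Summable (fun j => if X j ω = 0 then p j else 0) := by
      apply Summable.of_nonneg_of_le ?_ ?_ hsum
      · intro j; split_ifs; exacts [(hp j).1.le, le_rfl]
      · intro j; split_ifs; exacts [le_rfl, (hp j).1.le]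
    have hkey2 : ∀ j, (if X j ω = 1 then (1:ℝ) else 0) / m - (if X j ω = 0 then p j else 0)
        = - Z j ω := by
      intro j
      rw [hZapp]
      by_cases h0' : X j ω = 0
      · simp [h0']
      · by_cases h1' : X j ω = 1
        · simp [h0', h1']
        · simp [h0', h1']
    rw [hTdef]
    dsimp only
    rw [← tsum_div_const, ← Summable.tsum_sub (hu.div_const m) hv, tsum_congr hkey2, tsum_neg]
  have hTint : ∫ ω, T ω ∂μ = - ∑' j, e j := by
    rw [integral_congr_ae (g := fun ω => - S ω) hTS, integral_neg, hES]
  -- integrability of exp (lam * S)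
  have hSexpmeas : AEStronglyMeasurable (fun ω => Real.exp (lam * S ω)) μ := by
    apply aestronglyMeasurable_of_tendsto_ae atTop (fun N => hSNmeas N)
    filter_upwards [htendS] with ω hω
    exact (Real.continuous_exp.tendsto _).comp (hω.const_mul lam)
  have hSexpint : Integrable (fun ω => Real.exp (lam * S ω)) μ := by
    apply Integrable.mono' (integrable_const (Real.exp (lam * ∑' j, p j))) hSexpmeas
    filter_upwards [hSle] with ω hω
    rw [Real.norm_eq_abs, Real.abs_exp]
    exact Real.exp_le_exp.2 (mul_le_mul_of_nonneg_left hω hl0.le)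
  -- final assembly
  set ES : ℝ := ∑' j, e j with hESdef
  set C : ℝ := ∑' j, c j with hCdef2
  have hptwae : ∀ᵐ ω ∂μ, Real.exp (-lam * (T ω - ∫ ω', T ω' ∂μ))
      = Real.exp (lam * S ω) * Real.exp (-lam * ES) := by
    filter_upwards [hTS] with ω hω
    rw [← Real.exp_add, hTint, hω]
    congr 1
    ring
  have hIeq : ∫ ω, Real.exp (-lam * (T ω - ∫ ω', T ω' ∂μ)) ∂μ
      = (∫ ω, Real.exp (lam * S ω) ∂μ) * Real.exp (-lam * ES) := by
    rw [integral_congr_ae hptwae, integral_mul_const]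
  have hIle : ∫ ω, Real.exp (-lam * (T ω - ∫ ω', T ω' ∂μ)) ∂μ ≤ Real.exp C := by
    rw [hIeq]
    calc (∫ ω, Real.exp (lam * S ω) ∂μ) * Real.exp (-lam * ES)
        ≤ Real.exp (lam * ES + C) * Real.exp (-lam * ES) :=
          mul_le_mul_of_nonneg_right hfinal1 (Real.exp_pos _).le
    _ = Real.exp C := by rw [← Real.exp_add]; congr 1; ring
  have hIpos : 0 < ∫ ω, Real.exp (-lam * (T ω - ∫ ω', T ω' ∂μ)) ∂μ := by
    rw [hIeq]
    exact mul_pos (integral_exp_pos hSexpint) (Real.exp_pos _)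
  have hgoal : Real.log (∫ ω, Real.exp (-lam * (T ω - ∫ ω', T ω' ∂μ)) ∂μ) ≤ C :=
    le_trans (Real.log_le_log hIpos hIle) (le_of_eq (Real.log_exp C))
  have hCid : C = (4 / (m-1)^2 * ∑' j, (1 - Real.exp (-m * p j)))
      * lam^2 / (2 * (1 - lam / (m-1))) := by
    rw [hCdef2, hcdef, tsum_mul_left]
    ring
  rw [hCid] at hgoal
  exact hgoal
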